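/- Let Σ be a finite alphabet, let P_1, …, P_k and Q_1, …, Q_k be n-dimensional product distributions over Σ with factor distributions p_{i,t} and q_{i,t} respectively, and let w_1, …, w_k, v_1, …, v_k be real weights. Fix 1 ≤ j < n, and for x ∈ Σ^j define u_j(x) ∈ ℝ^{2k} by u_j(x)_i = w_i P_i^{≤j}(x) and u_j(x)_{k+i} = −v_i Q_i^{≤j}(x) for 1 ≤ i ≤ k. Suppose b_1, …, b_m ∈ ℝ^{2k} are vectors whose span contains {u_j(x) : x ∈ Σ^j}. Define, for each 1 ≤ ℓ ≤ m and y ∈ Σ, the vector c_ℓ(y) ∈ ℝ^{2k} by c_ℓ(y)_i = b_{ℓ,i} · p_{i,j+1}(y) and c_ℓ(y)_{k+i} = b_{ℓ,k+i} · q_{i,j+1}(y) for 1 ≤ i ≤ k. Then the span of {c_ℓ(y) : 1 ≤ ℓ ≤ m, y ∈ Σ} contains {u_{j+1}(x,y) : x ∈ Σ^j, y ∈ Σ}. -/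
import Mathlib


open Finset

/-- The coefficient vector `u_j(x) ∈ ℝ^{2k}` associated with weighted product
distributions: coordinate `i ≤ k` is `w_i P_i^{≤j}(x)` and coordinate `k+i` is
`−v_i Q_i^{≤j}(x)`, where `P_i^{≤j}(x) = ∏_{t=1}^j p_{i,t}(x_t)`. -/
noncomputable def uVec {A : Type*} {k n : ℕ}
    (p q : Fin k → Fin n → A → ℝ) (w v : Fin k → ℝ)
    (j : ℕ) (hjn : j ≤ n) (x : Fin j → A) : (Fin k ⊕ Fin k) → ℝ :=
  Sum.elim (fun i => w i * ∏ t : Fin j, p i (Fin.castLE hjn t) (x t))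
           (fun i => -(v i * ∏ t : Fin j, q i (Fin.castLE hjn t) (x t)))

/-- The vector `c_ℓ(y) ∈ ℝ^{2k}` obtained from a vector `b ∈ ℝ^{2k}` by multiplying
coordinate `i` by `p_{i,j+1}(y)` and coordinate `k+i` by `q_{i,j+1}(y)`. -/
noncomputable def cVec {A : Type*} {k n : ℕ}
    (p q : Fin k → Fin n → A → ℝ) {j : ℕ} (hjn : j + 1 ≤ n)
    (b : (Fin k ⊕ Fin k) → ℝ) (y : A) : (Fin k ⊕ Fin k) → ℝ :=
  Sum.elim (fun i => b (Sum.inl i) * p i (Fin.castLE hjn (Fin.last j)) y)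
           (fun i => b (Sum.inr i) * q i (Fin.castLE hjn (Fin.last j)) y)

/-- The map `b ↦ c(y)` as a linear map: componentwise multiplication by a fixed
vector `g`. -/
noncomputable def mulLin {ι : Type*} (g : ι → ℝ) : (ι → ℝ) →ₗ[ℝ] (ι → ℝ) where
  toFun f := fun s => f s * g s
  map_add' f₁ f₂ := by funext s; simp [add_mul]
  map_smul' c f := by funext s; simp [mul_assoc]

/-- if the span of `b_1, …, b_m` contains all the vectors `u_j(x)`,
then the span of the vectors `c_ℓ(y)` (for `1 ≤ ℓ ≤ m`, `y ∈ Σ`) contains all the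
vectors `u_{j+1}(x,y)`. -/
theorem uVec_snoc_mem_span_cVec
    (A : Type*) [Fintype A] (k n : ℕ)
    (p q : Fin k → Fin n → A → ℝ) (w v : Fin k → ℝ)
    (hp : ∀ i t, (∀ a, 0 ≤ p i t a) ∧ (∑ a, p i t a = 1))
    (hq : ∀ i t, (∀ a, 0 ≤ q i t a) ∧ (∑ a, q i t a = 1))
    (j : ℕ) (hj1 : 1 ≤ j) (hjn : j + 1 ≤ n)
    (m : ℕ) (b : Fin m → (Fin k ⊕ Fin k) → ℝ)
    (hspan : ∀ x : Fin j → A,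
      uVec p q w v j (by omega) x ∈ Submodule.span ℝ (Set.range b)) :
    ∀ (x : Fin j → A) (y : A),
      uVec p q w v (j + 1) hjn (Fin.snoc x y)
        ∈ Submodule.span ℝ
            (Set.range (fun ℓy : Fin m × A => cVec p q hjn (b ℓy.1) ℓy.2)) := by
  intro x y
  have hjn' : j ≤ n := by omega
  set g : (Fin k ⊕ Fin k) → ℝ :=
    Sum.elim (fun i => p i (Fin.castLE hjn (Fin.last j)) y)
             (fun i => q i (Fin.castLE hjn (Fin.last j)) y) with hg
  have hT : ∀ f, mulLin g f = fun s => f s * g s := fun f => rfl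
  have key : uVec p q w v (j + 1) hjn (Fin.snoc x y)
      = mulLin g (uVec p q w v j hjn' x) := by
    funext s
    rw [hT]
    cases s with
    | inl i =>
        simp only [uVec, Sum.elim_inl, hg, Fin.prod_univ_castSucc, mul_assoc]
        congr 1
        congr 1
        apply Finset.prod_congr rfl
        intro t _
        have ht : (Fin.castLE hjn t.castSucc) = Fin.castLE hjn' t := Fin.ext rfl
        rw [ht, Fin.snoc_castSucc]
        rw [Fin.snoc_last]
    | inr i =>
        simp only [uVec, Sum.elim_inr, hg, Fin.prod_univ_castSucc, neg_mul]
        congr 1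
        rw [mul_assoc]
        congr 1
        congr 1
        apply Finset.prod_congr rfl
        intro t _
        have ht : (Fin.castLE hjn t.castSucc) = Fin.castLE hjn' t := Fin.ext rfl
        rw [ht, Fin.snoc_castSucc]
        rw [Fin.snoc_last]
  rw [key]
  have h1 : mulLin g (uVec p q w v j hjn' x)
      ∈ Submodule.map (mulLin g) (Submodule.span ℝ (Set.range b)) :=
    Submodule.mem_map_of_mem (hspan x)
  rw [Submodule.map_span] at h1
  refine Submodule.span_mono ?_ h1
  rintro _ ⟨_, ⟨ℓ, rfl⟩, rfl⟩
  refine ⟨(ℓ, y), ?_⟩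
  funext s
  cases s <;> rfl
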